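/- Let I ⊆ k[x_1,…,x_n] be a monomial ideal. If ū e_i is a monomial cycle in Koszul homological degree 1 (i.e. x_i u ∈ I, u ∉ I), then [ū e_i] = 0 in H_1(K^{S/I}) if and only if u ∈ I + (x_j : j ≠ i)·(I : x_i). -/

import Mathlib

open MvPolynomial

/-- The Koszul sign `sgn(τ, j) = (-1)^{#{s ∈ τ : s < j}}`. -/
def koszulSgn {n : ℕ} (τ : Finset (Fin n)) (j : Fin n) : ℤ :=
  (-1) ^ ((τ.filter fun s => s < j).card)

/-- The Koszul differential on chains, represented as functions
`Finset (Fin n) → R` (the value at `σ` is the coefficient of `e_σ`):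
`(∂w)(σ) = Σ_{j ∉ σ} sgn(σ ∪ {j}, j) · x_j · w(σ ∪ {j})`. -/
noncomputable def koszulBd {n : ℕ} {R : Type*} [CommRing R] (x : Fin n → R)
    (w : Finset (Fin n) → R) (σ : Finset (Fin n)) : R :=
  ∑ j ∈ σᶜ, koszulSgn (insert j σ) j • (x j * w (insert j σ))

/-- `I` is a monomial ideal: generated by a set of monomials. -/
def IsMonomialIdeal {k : Type*} [Field k] {n : ℕ}
    (I : Ideal (MvPolynomial (Fin n) k)) : Prop :=
  ∃ G : Set (Fin n →₀ ℕ),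
    I = Ideal.span ((fun d => (monomial d (1 : k) : MvPolynomial (Fin n) k)) '' G)

lemma koszulSgn_pair {n : ℕ} {v l : Fin n} (h : v ≠ l) :
    koszulSgn (insert l {v}) l = if v < l then -1 else 1 := by
  unfold koszulSgn
  rw [Finset.filter_insert, if_neg (lt_irrefl l), Finset.filter_singleton]
  by_cases hvl : v < l <;> simp [hvl]

lemma koszulSgn_pair_antisymm {n : ℕ} {v l : Fin n} (h : v ≠ l) :
    koszulSgn (insert l {v}) l + koszulSgn (insert v {l}) v = 0 := by
  rw [koszulSgn_pair h, koszulSgn_pair (Ne.symm h)]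
  rcases lt_or_gt_of_ne h with h1 | h1
  · rw [if_pos h1, if_neg (not_lt.2 h1.le)]; ring
  · rw [if_neg (not_lt.2 h1.le), if_pos h1]; ring

lemma monomial_mem_aux {k : Type*} [Field k] {n : ℕ} {G : Set (Fin n →₀ ℕ)}
    {f : MvPolynomial (Fin n) k}
    (hf : f ∈ Ideal.span ((fun d => (monomial d (1 : k) : MvPolynomial (Fin n) k)) '' G)) :
    ∀ t : Fin n →₀ ℕ, coeff t f ≠ 0 →
      monomial t (1 : k) ∈
        Ideal.span ((fun d => (monomial d (1 : k) : MvPolynomial (Fin n) k)) '' G) := by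
  induction hf using Submodule.span_induction with
  | mem x hx =>
    rintro t ht
    obtain ⟨g, hgG, rfl⟩ := hx
    rw [coeff_monomial] at ht
    rcases eq_or_ne g t with rfl | hne
    · exact Ideal.subset_span ⟨g, hgG, rfl⟩
    · exact absurd (if_neg hne) ht
  | zero => intro t ht; simp at ht
  | add x y _ _ hx hy =>
    intro t ht
    rw [coeff_add] at ht
    rcases eq_or_ne (coeff t x) 0 with h0 | h0
    · exact hy t (by rwa [h0, zero_add] at ht)
    · exact hx t h0
  | smul r x _ hx =>
    intro t ht
    rw [smul_eq_mul, coeff_mul] at ht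
    obtain ⟨p, hp, hpne⟩ := Finset.exists_ne_zero_of_sum_ne_zero ht
    have h2 : coeff p.2 x ≠ 0 := fun h => hpne (by rw [h, mul_zero])
    have := hx p.2 h2
    have heq : monomial t (1:k) = monomial p.1 (1:k) * monomial p.2 (1:k) := by
      rw [monomial_mul, one_mul, Finset.HasAntidiagonal.mem_antidiagonal.1 hp]
    rw [heq]
    exact Ideal.mul_mem_left _ _ this

lemma monomial_mem_of_coeff_ne_zero {k : Type*} [Field k] {n : ℕ}
    {I : Ideal (MvPolynomial (Fin n) k)} (hI : IsMonomialIdeal I)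
    {f : MvPolynomial (Fin n) k} (hf : f ∈ I) {t : Fin n →₀ ℕ}
    (ht : coeff t f ≠ 0) : monomial t (1 : k) ∈ I := by
  obtain ⟨G, rfl⟩ := hI
  exact monomial_mem_aux hf t ht

lemma colon_mul_aux {k : Type*} [Field k] {n : ℕ}
    {I : Ideal (MvPolynomial (Fin n) k)} (hI : IsMonomialIdeal I) {i : Fin n}
    {f g : MvPolynomial (Fin n) k}
    (hf : f ∈ Ideal.span {f : MvPolynomial (Fin n) k | ∃ j : Fin n, j ≠ i ∧ f = X j})
    (hg : g ∈ Submodule.colon I (Ideal.span {(X i : MvPolynomial (Fin n) k)})) :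
    ∀ t : Fin n →₀ ℕ, coeff t (f * g) ≠ 0 →
      ∃ j : Fin n, j ≠ i ∧ t j ≠ 0 ∧
        monomial ((t - Finsupp.single j 1) + Finsupp.single i 1) (1 : k) ∈ I := by
  classical
  induction hf using Submodule.span_induction with
  | mem x hx =>
    obtain ⟨j, hj, rfl⟩ := hx
    intro t ht
    rw [coeff_X_mul'] at ht
    by_cases hsupp : j ∈ t.support
    · rw [if_pos hsupp] at ht
      refine ⟨j, hj, Finsupp.mem_support_iff.1 hsupp, ?_⟩
      have hXig : g * X i ∈ I := Ideal.mem_colon_span_singleton.1 hg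
      exact monomial_mem_of_coeff_ne_zero hI hXig (by rw [coeff_mul_X]; exact ht)
    · rw [if_neg hsupp] at ht; exact absurd rfl ht
  | zero => intro t ht; simp at ht
  | add x y _ _ hx hy =>
    intro t ht
    rw [add_mul, coeff_add] at ht
    rcases eq_or_ne (coeff t (x * g)) 0 with h0 | h0
    · exact hy t (by rwa [h0, zero_add] at ht)
    · exact hx t h0
  | smul r x _ hx =>
    intro t ht
    rw [smul_eq_mul, mul_assoc, coeff_mul] at ht
    obtain ⟨p, hp, hpne⟩ := Finset.exists_ne_zero_of_sum_ne_zero ht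
    have h2 : coeff p.2 (x * g) ≠ 0 := fun h => hpne (by rw [h, mul_zero])
    obtain ⟨j, hj, htj, hmem⟩ := hx p.2 h2
    have hte : t = p.1 + p.2 := (Finset.HasAntidiagonal.mem_antidiagonal.1 hp).symm
    refine ⟨j, hj, ?_, ?_⟩
    · rw [hte, Finsupp.add_apply]
      exact fun h => htj (Nat.eq_zero_of_add_eq_zero_left h)
    · have hle : Finsupp.single j 1 ≤ p.2 :=
        Finsupp.single_le_iff.2 (Nat.one_le_iff_ne_zero.2 htj)
      have : t - Finsupp.single j 1 = p.1 + (p.2 - Finsupp.single j 1) := by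
        rw [hte, add_tsub_assoc_of_le hle]
      rw [this, add_assoc, ← one_mul (1 : k), ← monomial_mul]
      exact Ideal.mul_mem_left _ _ hmem

lemma mem_sum_iff {k : Type*} [Field k] {n : ℕ}
    (I : Ideal (MvPolynomial (Fin n) k)) (hI : IsMonomialIdeal I)
    (d : Fin n →₀ ℕ) (i : Fin n) (hnz : (monomial d (1:k) : MvPolynomial (Fin n) k) ∉ I) :
    ((monomial d (1:k) : MvPolynomial (Fin n) k) ∈
        I + Ideal.span {f | ∃ j : Fin n, j ≠ i ∧ f = X j} *
          Submodule.colon I (Ideal.span {(X i : MvPolynomial (Fin n) k)}))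
      ↔ ∃ j : Fin n, j ≠ i ∧ d j ≠ 0 ∧
          monomial ((d - Finsupp.single j 1) + Finsupp.single i 1) (1 : k) ∈ I := by
  classical
  constructor
  · intro hmem
    rw [Ideal.add_eq_sup, Submodule.mem_sup] at hmem
    obtain ⟨a, haI, b, hb, hab⟩ := hmem
    have hca : coeff d a = 0 := by
      by_contra hca
      exact hnz (monomial_mem_of_coeff_ne_zero hI haI hca)
    have hcb : coeff d b ≠ 0 := by
      have : coeff d (a + b) = 1 := by rw [hab, coeff_monomial, if_pos rfl]
      rw [coeff_add, hca, zero_add] at this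
      rw [this]; exact one_ne_zero
    refine Submodule.mul_induction_on hb
      (fun f hf g hg => colon_mul_aux hI hf hg) ?_ d hcb
    intro x y hx hy t ht
    rcases eq_or_ne (coeff t x) 0 with h0 | h0
    · exact hy t (by rwa [coeff_add, h0, zero_add] at ht)
    · exact hx t h0
  · rintro ⟨j, hj, hdj, hmem⟩
    have hle : Finsupp.single j 1 ≤ d := Finsupp.single_le_iff.2 (Nat.one_le_iff_ne_zero.2 hdj)
    have hXg : (X j : MvPolynomial (Fin n) k) * monomial (d - Finsupp.single j 1) 1
        = monomial d 1 := by
      rw [X, monomial_mul, one_mul, add_tsub_cancel_of_le hle]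
    have hgC : (monomial (d - Finsupp.single j 1) (1:k) : MvPolynomial (Fin n) k) ∈
        Submodule.colon I (Ideal.span {(X i : MvPolynomial (Fin n) k)}) := by
      rw [Ideal.mem_colon_span_singleton, X, monomial_mul, mul_one]
      exact hmem
    have hXJ : (X j : MvPolynomial (Fin n) k) ∈
        Ideal.span {f : MvPolynomial (Fin n) k | ∃ j : Fin n, j ≠ i ∧ f = X j} :=
      Ideal.subset_span ⟨j, hj, rfl⟩
    rw [Ideal.add_eq_sup]
    exact Submodule.mem_sup_right (hXg ▸ Ideal.mul_mem_mul hXJ hgC)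

lemma koszul_exists_of_cond {k : Type*} [Field k] {n : ℕ}
    (I : Ideal (MvPolynomial (Fin n) k)) (d : Fin n →₀ ℕ) (i : Fin n)
    {j : Fin n} (hj : j ≠ i) (hdj : d j ≠ 0)
    (hmem : monomial ((d - Finsupp.single j 1) + Finsupp.single i 1) (1 : k) ∈ I) :
    ∃ w : Finset (Fin n) → (MvPolynomial (Fin n) k ⧸ I),
        koszulBd (fun l => Ideal.Quotient.mk I (X l)) w
          = fun τ => if τ = ({i} : Finset (Fin n)) then
              Ideal.Quotient.mk I (monomial d (1:k)) else 0 := by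
  classical
  set g : MvPolynomial (Fin n) k := monomial (d - Finsupp.single j 1) 1 with hg
  set s : ℤ := koszulSgn (insert j ({i} : Finset (Fin n))) j with hs
  have hXjg : (X j : MvPolynomial (Fin n) k) * g = monomial d 1 := by
    rw [hg, X, monomial_mul, one_mul,
      add_tsub_cancel_of_le (Finsupp.single_le_iff.2 (Nat.one_le_iff_ne_zero.2 hdj))]
  have hXig : (X i : MvPolynomial (Fin n) k) * g ∈ I := by
    rw [hg, X, monomial_mul, one_mul, add_comm]
    exact hmem
  have hss : s * s = 1 := by
    rw [hs]; unfold koszulSgn; rw [← pow_add]; exact Even.neg_one_pow ⟨_, rfl⟩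
  refine ⟨fun τ => if τ = insert j ({i} : Finset (Fin n)) then
      s • Ideal.Quotient.mk I g else 0, ?_⟩
  funext σ
  simp only [koszulBd]
  by_cases hσi : σ = ({i} : Finset (Fin n))
  · subst hσi
    rw [if_pos rfl]
    rw [Finset.sum_eq_single j]
    · rw [if_pos rfl, ← hs, mul_smul_comm, smul_smul, hss, one_smul, ← map_mul, hXjg]
    · intro l hl hlj
      have hli : l ≠ i := by simpa using hl
      rw [if_neg, mul_zero, smul_zero]
      intro hP
      have : l ∈ insert j ({i} : Finset (Fin n)) := hP ▸ Finset.mem_insert_self l _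
      rcases Finset.mem_insert.1 this with h | h
      exacts [hlj h, hli (Finset.mem_singleton.1 h)]
    · intro hj'
      exact absurd (Finset.mem_compl.2 (fun h => hj (Finset.mem_singleton.1 h))) hj'
  · rw [if_neg hσi]
    apply Finset.sum_eq_zero
    intro l hl
    have hlσ : l ∉ σ := Finset.mem_compl.1 hl
    by_cases hP : insert l σ = insert j ({i} : Finset (Fin n))
    · have hσe : σ = (insert j ({i} : Finset (Fin n))).erase l := by
        rw [← hP, Finset.erase_insert hlσ]
      have hlmem : l ∈ insert j ({i} : Finset (Fin n)) := hP ▸ Finset.mem_insert_self l σ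
      rcases Finset.mem_insert.1 hlmem with rfl | hl1
      · exact absurd (by rw [hσe, Finset.erase_insert (by simp [hj])]) hσi
      · have hli : l = i := Finset.mem_singleton.1 hl1
        subst hli
        rw [hP, if_pos rfl, mul_smul_comm, ← map_mul,
          Ideal.Quotient.eq_zero_iff_mem.2 hXig, smul_zero, smul_zero]
    · rw [if_neg hP, mul_zero, smul_zero]

set_option synthInstance.maxHeartbeats 1000000 in
lemma cond_of_koszul {k : Type*} [Field k] {n : ℕ}
    {I : Ideal (MvPolynomial (Fin n) k)} (hI : IsMonomialIdeal I)
    (d : Fin n →₀ ℕ) (i : Fin n)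
    (hnz : (monomial d (1:k) : MvPolynomial (Fin n) k) ∉ I)
    (w : Finset (Fin n) → (MvPolynomial (Fin n) k ⧸ I))
    (hw : koszulBd (fun j => Ideal.Quotient.mk I (X j)) w
          = fun τ => if τ = ({i} : Finset (Fin n)) then
              Ideal.Quotient.mk I (monomial d (1:k)) else 0) :
    ∃ j : Fin n, j ≠ i ∧ d j ≠ 0 ∧
      monomial ((d - Finsupp.single j 1) + Finsupp.single i 1) (1 : k) ∈ I := by
  classical
  choose W hW using fun τ => Ideal.Quotient.mk_surjective (I := I) (w τ)
  set m : Fin n →₀ ℕ := d + Finsupp.single i 1 with hm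
  set L : Fin n → MvPolynomial (Fin n) k := fun v =>
    ∑ l ∈ ({v} : Finset (Fin n))ᶜ,
      koszulSgn (insert l {v}) l • (X l * W (insert l {v})) with hL
  have hmkL : ∀ v, Ideal.Quotient.mk I (L v)
      = koszulBd (fun j => Ideal.Quotient.mk I (X j)) w {v} := by
    intro v
    simp only [hL, koszulBd]
    rw [map_sum]
    refine Finset.sum_congr rfl fun l _ => ?_
    rw [map_zsmul, map_mul, hW]
  have hLi : L i - monomial d 1 ∈ I := by
    have h1 := congrFun hw ({i} : Finset (Fin n))
    rw [if_pos rfl] at h1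
    exact Ideal.Quotient.eq.1 ((hmkL i).trans h1)
  have hLv : ∀ v, v ≠ i → L v ∈ I := by
    intro v hv
    have h1 := congrFun hw ({v} : Finset (Fin n))
    rw [if_neg (by simpa using hv)] at h1
    exact Ideal.Quotient.eq_zero_iff_mem.1 ((hmkL v).trans h1)
  set c : Fin n → k := fun v => coeff (m - Finsupp.single v 1) (L v) with hc
  have hdm : m - Finsupp.single i 1 = d := by
    ext a
    rw [Finsupp.tsub_apply, hm, Finsupp.add_apply]
    omega
  have hci : c i = 1 := by
    have h2 : coeff d (L i - monomial d 1) = c i - 1 := by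
      simp only [coeff_sub, coeff_monomial, eq_self_iff_true, if_true, hc, hdm]
    by_contra hne
    have h3 : coeff d (L i - monomial d 1) ≠ 0 := by
      rw [h2]; exact sub_ne_zero.2 hne
    exact hnz (monomial_mem_of_coeff_ne_zero hI hLi h3)
  set F : Fin n × Fin n → k := fun p =>
    (koszulSgn (insert p.2 {p.1}) p.2 : ℤ) •
      coeff (m - Finsupp.single p.1 1 - Finsupp.single p.2 1) (W (insert p.2 {p.1})) with hF
  have hsub : ∀ v l : Fin n, l ≠ v →
      (m - Finsupp.single v 1 : Fin n →₀ ℕ) l = m l := by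
    intro v l hlv
    rw [Finsupp.tsub_apply, Finsupp.single_eq_of_ne' (Ne.symm hlv), Nat.sub_zero]
  have hcv : ∀ v ∈ m.support, c v = ∑ l ∈ m.support.erase v, F (v, l) := by
    intro v _
    have hsubset : m.support.erase v ⊆ ({v} : Finset (Fin n))ᶜ := fun l hl =>
      Finset.mem_compl.2 fun h => (Finset.mem_erase.1 hl).1 (Finset.mem_singleton.1 h)
    have hstep : ∀ l ∈ ({v} : Finset (Fin n))ᶜ, l ∉ m.support.erase v →
        coeff (m - Finsupp.single v 1)
          (koszulSgn (insert l {v}) l • (X l * W (insert l {v}))) = 0 := by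
      intro l hl hlnot
      have hlv : l ≠ v := fun h => by
        exact (Finset.mem_compl.1 hl) (h ▸ Finset.mem_singleton_self v)
      have hlm : m l = 0 := by
        by_contra h
        exact hlnot (Finset.mem_erase.2 ⟨hlv, Finsupp.mem_support_iff.2 h⟩)
      have hnot : l ∉ (m - Finsupp.single v 1).support := by
        rw [Finsupp.notMem_support_iff, hsub v l hlv]
        exact hlm
      rw [coeff_smul, coeff_X_mul', if_neg hnot, smul_zero]
    simp only [hc, hL]
    rw [coeff_sum, ← Finset.sum_subset hsubset hstep]
    refine Finset.sum_congr rfl fun l hl => ?_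
    obtain ⟨hlv, hlm⟩ := Finset.mem_erase.1 hl
    have hcond : l ∈ (m - Finsupp.single v 1).support := by
      rw [Finsupp.mem_support_iff, hsub v l hlv]
      exact Finsupp.mem_support_iff.1 hlm
    rw [coeff_smul, coeff_X_mul', if_pos hcond]
  have hpair : ∀ p : Fin n × Fin n, p.1 ≠ p.2 → F p + F p.swap = 0 := by
    rintro ⟨v, l⟩ hvl
    replace hvl : v ≠ l := hvl
    simp only [hF, Prod.swap]
    have h1 : insert v ({l} : Finset (Fin n)) = insert l {v} := by
      rw [Finset.insert_eq, Finset.insert_eq, Finset.union_comm]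
    have h2 : m - Finsupp.single l 1 - Finsupp.single v 1
        = m - Finsupp.single v 1 - Finsupp.single l 1 := tsub_right_comm
    have h3 : koszulSgn (insert l {v}) l + koszulSgn (insert l {v}) v = 0 := by
      have h4 := koszulSgn_pair_antisymm hvl
      rwa [h1] at h4
    rw [h1, h2, ← add_smul, h3, zero_smul]
  have hoff : ∑ p ∈ m.support.offDiag, F p = 0 := by
    refine Finset.sum_involution (fun p _ => p.swap) ?_ ?_ ?_ ?_
    · intro p hp
      exact hpair p (Finset.mem_offDiag.1 hp).2.2
    · intro p hp _ h
      have h' : p.2 = p.1 := congrArg Prod.fst h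
      exact (Finset.mem_offDiag.1 hp).2.2 h'.symm
    · intro p hp
      obtain ⟨h1, h2, h3⟩ := Finset.mem_offDiag.1 hp
      exact Finset.mem_offDiag.2 ⟨h2, h1, Ne.symm h3⟩
    · intro p hp
      exact Prod.swap_swap p
  have hsumc : ∑ v ∈ m.support, c v = 0 := by
    rw [Finset.sum_congr rfl hcv, ← hoff]
    rw [show m.support.offDiag = (m.support ×ˢ m.support).filter (fun a => a.1 ≠ a.2) from by ext; simp [and_assoc], Finset.sum_filter, Finset.sum_product]
    refine Finset.sum_congr rfl fun v _ => ?_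
    rw [Finset.sum_ite, Finset.sum_const_zero, add_zero]
    refine Finset.sum_congr ?_ (fun _ _ => rfl)
    ext l
    simp only [Finset.mem_filter, Finset.mem_erase]
    exact ⟨fun ⟨h1, h2⟩ => ⟨h2, Ne.symm h1⟩, fun ⟨h1, h2⟩ => ⟨Ne.symm h2, h1⟩⟩
  have him : i ∈ m.support := by
    rw [Finsupp.mem_support_iff, hm, Finsupp.add_apply, Finsupp.single_eq_same]
    exact Nat.succ_ne_zero _
  have herase : ∑ v ∈ m.support.erase i, c v ≠ 0 := by
    have h5 := Finset.add_sum_erase _ c him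
    rw [hsumc, hci] at h5
    have h6 : ∑ v ∈ m.support.erase i, c v = -1 := eq_neg_of_add_eq_zero_right h5
    rw [h6]
    exact neg_ne_zero.2 one_ne_zero
  obtain ⟨v, hv, hcvne⟩ := Finset.exists_ne_zero_of_sum_ne_zero herase
  obtain ⟨hvi, hvm⟩ := Finset.mem_erase.1 hv
  have hdv : d v ≠ 0 := by
    have h7 : m v = d v := by
      rw [hm, Finsupp.add_apply, Finsupp.single_eq_of_ne' (Ne.symm hvi), add_zero]
    rw [← h7]; exact Finsupp.mem_support_iff.1 hvm
  refine ⟨v, hvi, hdv, ?_⟩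
  have hmeq : m - Finsupp.single v 1 = (d - Finsupp.single v 1) + Finsupp.single i 1 := by
    ext a
    rw [Finsupp.tsub_apply, Finsupp.add_apply, Finsupp.add_apply, Finsupp.tsub_apply]
    rcases eq_or_ne a v with rfl | hav
    · rw [Finsupp.single_eq_of_ne' (Ne.symm hvi), Finsupp.single_eq_same, add_zero, add_zero]
    · rw [Finsupp.single_eq_of_ne' (Ne.symm hav), Nat.sub_zero, Nat.sub_zero]
  rw [← hmeq]
  exact monomial_mem_of_coeff_ne_zero hI (hLv v hvi) hcvne

/-- if `ū e_i` is a monomial cycle in Koszul homological degree 1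
(`x_i u ∈ I`, `u ∉ I`), then `[ū e_i] = 0` in `H₁(K^{S/I})` iff
`u ∈ I + (x_j : j ≠ i)·(I : x_i)`. -/
theorem stmt7 {k : Type*} [Field k] {n : ℕ}
    (I : Ideal (MvPolynomial (Fin n) k)) (hI : IsMonomialIdeal I)
    (d : Fin n →₀ ℕ) (u : MvPolynomial (Fin n) k) (hu : u = monomial d (1 : k))
    (i : Fin n) (hcyc : X i * u ∈ I) (hnz : u ∉ I) :
    (∃ w : Finset (Fin n) → (MvPolynomial (Fin n) k ⧸ I),
        koszulBd (fun j => Ideal.Quotient.mk I (X j)) w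
          = fun τ => if τ = ({i} : Finset (Fin n)) then Ideal.Quotient.mk I u else 0)
      ↔ u ∈ I + Ideal.span {f | ∃ j : Fin n, j ≠ i ∧ f = X j} *
            Submodule.colon I (Ideal.span {(X i : MvPolynomial (Fin n) k)}) := by
  subst hu
  rw [mem_sum_iff I hI d i hnz]
  constructor
  · rintro ⟨w, hw⟩
    exact cond_of_koszul hI d i hnz w hw
  · rintro ⟨j, hj, hdj, hmem⟩
    exact koszul_exists_of_cond I d i hj hdj hmem
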